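/- arXiv:math/0610877 — 4 statements merged into one kernel-verified Lean document; each statement's English description precedes it below -/
import Mathlib

section
/- Let C be a category and F a functor from C to ℂ-vector spaces, and suppose F is irreducible. Then for every object X of C, every subspace of F(X) that is invariant under F(P) for all endomorphisms P : X ⟶ X equals 0 or all of F(X); that is, all subordinated representations of the endomorphism monoids End(X) are irreducible. (Lemma of Section 4 / Lemma 5.5.) -/
open CategoryTheory

/-- **Lemma 5.5 / Section 4 lemma.** Let `F` be a functor from a category `C` to complex
vector spaces (a representation of `C`). If `F` is irreducible — i.e. every family of
subspaces `A X ≤ F X` stable under all the operators `F P` is either everywhere zero or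
everywhere full — then for every object `X`, every subspace of `F X` invariant under
`F P` for all endomorphisms `P : X ⟶ X` equals `0` or all of `F X`: all the
subordinated representations of the endomorphism monoids are irreducible. -/
theorem subordinate_irreducible {C : Type*} [Category C] (F : C ⥤ ModuleCat ℂ)
    (hirr : ∀ A : (X : C) → Submodule ℂ (F.obj X),
      (∀ (X Y : C) (P : X ⟶ Y), (A X).map (F.map P).hom ≤ A Y) →
      (∀ X, A X = ⊥) ∨ (∀ X, A X = ⊤))
    (X : C) (U : Submodule ℂ (F.obj X))
    (hU : ∀ P : X ⟶ X, U.map (F.map P).hom ≤ U) :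
    U = ⊥ ∨ U = ⊤ := by
  set A : (Y : C) → Submodule ℂ (F.obj Y) :=
    fun Y => ⨆ P : X ⟶ Y, U.map (F.map P).hom with hA
  have hAX : A X = U := by
    apply le_antisymm
    · exact iSup_le fun P => hU P
    · refine le_iSup_of_le (𝟙 X) ?_
      rw [F.map_id]
      intro u hu
      exact ⟨u, hu, rfl⟩
  have hstable : ∀ (Y Z : C) (Q : Y ⟶ Z), (A Y).map (F.map Q).hom ≤ A Z := by
    intro Y Z Q
    rw [hA]
    simp only [Submodule.map_iSup]
    refine iSup_le fun P => le_iSup_of_le (P ≫ Q) ?_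
    rw [F.map_comp]
    rintro z ⟨y, ⟨u, hu, rfl⟩, rfl⟩
    exact ⟨u, hu, rfl⟩
  rcases hirr A hstable with h | h
  · left; rw [← hAX]; exact h X
  · right; rw [← hAX]; exact h X
end

section
/- Let M be a ℂ-module, k a natural number, and v₁, …, v_k ∈ M; write νᵢ = ι(vᵢ) for the corresponding degree-one elements of the exterior algebra Λ(M). Then the ordered product (1+ν₁)(1+ν₂)⋯(1+ν_k) equals exp(Σ_{1≤i<j≤k} νᵢνⱼ) · exp(Σ_{i=1}^k νᵢ), where both exponents are nilpotent elements of Λ(M) (in particular (Σᵢνᵢ)² = 0, so exp(Σᵢνᵢ) = 1 + Σᵢνᵢ). (Equation (5.4).) -/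
open ExteriorAlgebra

/-- The exponential `exp x = Σ_{j} x^j / j!` of a nilpotent element: the sum is finite,
running up to the nilpotency class of `x`. -/
noncomputable def nilExp {A : Type*} [Ring A] [Algebra ℂ A] (x : A) : A :=
  ∑ j ∈ Finset.range (nilpotencyClass x), (j.factorial : ℂ)⁻¹ • x ^ j

section Aux
variable {A : Type*} [Ring A] [Algebra ℂ A]

lemma nilExp_eq_sum {x : A} {N : ℕ} (hx : x ^ N = 0) :
    nilExp x = ∑ j ∈ Finset.range N, (j.factorial : ℂ)⁻¹ • x ^ j := by
  have hnil : IsNilpotent x := ⟨N, hx⟩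
  have hle : nilpotencyClass x ≤ N := Nat.sInf_le hx
  refine Finset.sum_subset (Finset.range_subset_range.2 hle) ?_
  intro j _ hj'
  simp only [Finset.mem_range, not_lt] at hj'
  rw [pow_eq_zero_of_le hj' (pow_nilpotencyClass hnil), smul_zero]

lemma nilExp_of_sq_zero {x : A} (hx : x ^ 2 = 0) : nilExp x = 1 + x := by
  rw [nilExp_eq_sum hx]
  simp [Finset.sum_range_succ]

lemma pow_add_sq_zero {x b : A} (hb : b * b = 0) (hc : x * b = b * x) (n : ℕ) :
    (x + b) ^ (n + 1) = x ^ (n + 1) + (n + 1) • (x ^ n * b) := by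
  induction n with
  | zero => simp
  | succ n ih =>
    have h1 : x ^ n * b * x = x ^ (n + 1) * b := by
      rw [mul_assoc, ← hc, ← mul_assoc, ← pow_succ]
    have h2 : x ^ n * b * b = 0 := by rw [mul_assoc, hb, mul_zero]
    rw [pow_succ, ih, add_mul, mul_add, mul_add, smul_mul_assoc, smul_mul_assoc,
      h1, h2, smul_zero, add_zero, ← pow_succ, succ_nsmul (x ^ (n+1) * b) (n+1)]
    abel

lemma nilExp_add_sq_zero {x b : A} (hx : IsNilpotent x) (hb : b * b = 0)
    (hc : x * b = b * x) : nilExp (x + b) = nilExp x * (1 + b) := by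
  set C := nilpotencyClass x with hC
  have hxC : x ^ C = 0 := pow_nilpotencyClass hx
  have hxC1 : x ^ (C + 1) = 0 := by rw [pow_succ, hxC, zero_mul]
  have hsum : (x + b) ^ (C + 1) = 0 := by
    rw [pow_add_sq_zero hb hc, hxC1, hxC, zero_mul, smul_zero, add_zero]
  have hterm : ∀ i : ℕ, (((i+1).factorial : ℂ))⁻¹ • (x + b) ^ (i + 1)
      = ((i+1).factorial : ℂ)⁻¹ • x ^ (i + 1) + (i.factorial : ℂ)⁻¹ • (x ^ i * b) := by
    intro i
    have h0 : ((i : ℂ) + 1) ≠ 0 := Nat.cast_add_one_ne_zero i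
    have hfac : (((i+1).factorial : ℂ))⁻¹ * (((i+1) : ℕ) : ℂ) = ((i.factorial : ℂ))⁻¹ := by
      rw [Nat.factorial_succ]
      push_cast
      rw [mul_inv, mul_right_comm, inv_mul_cancel₀ h0, one_mul]
    rw [pow_add_sq_zero hb hc, smul_add, ← Nat.cast_smul_eq_nsmul ℂ, smul_smul, hfac]
  have hshift : (∑ i ∈ Finset.range C, ((i+1).factorial : ℂ)⁻¹ • x ^ (i + 1)) + 1
      = nilExp x := by
    rw [nilExp_eq_sum hxC1, Finset.sum_range_succ']
    simp
  have hnil_def : nilExp x = ∑ i ∈ Finset.range C, (i.factorial : ℂ)⁻¹ • x ^ i :=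
    nilExp_eq_sum hxC
  calc nilExp (x + b)
      = ∑ j ∈ Finset.range (C + 1), (j.factorial : ℂ)⁻¹ • (x + b) ^ j :=
        nilExp_eq_sum hsum
    _ = (∑ i ∈ Finset.range C, ((i+1).factorial : ℂ)⁻¹ • (x + b) ^ (i + 1)) + 1 := by
        rw [Finset.sum_range_succ']; simp
    _ = ((∑ i ∈ Finset.range C, ((i+1).factorial : ℂ)⁻¹ • x ^ (i + 1)) + 1)
        + ∑ i ∈ Finset.range C, (i.factorial : ℂ)⁻¹ • (x ^ i * b) := by
        rw [Finset.sum_congr rfl fun i _ => hterm i, Finset.sum_add_distrib]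
        abel
    _ = nilExp x + nilExp x * b := by
        rw [hshift, hnil_def, Finset.sum_mul]
        simp [smul_mul_assoc]
    _ = nilExp x * (1 + b) := by rw [mul_add, mul_one]

lemma anticomm_mul {u v w : A} (hu : u * w = - (w * u)) (hv : v * w = - (w * v)) :
    (u * v) * w = w * (u * v) := by
  calc u * v * w = u * (v * w) := mul_assoc ..
    _ = -(u * (w * v)) := by rw [hv, mul_neg]
    _ = -(u * w) * v := by rw [neg_mul, mul_assoc]
    _ = (w * u) * v := by rw [hu, neg_neg]
    _ = w * (u * v) := mul_assoc ..

lemma pair_sq_zero {u v : A} (hu : u * u = 0) (hvu : v * u = - (u * v)) :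
    (u * v) * (u * v) = 0 := by
  calc (u * v) * (u * v) = u * (v * u) * v := by rw [mul_assoc, mul_assoc, mul_assoc]
    _ = -(u * (u * v) * v) := by rw [hvu, mul_neg, neg_mul]
    _ = -((u * u) * (v * v)) := by rw [mul_assoc, mul_assoc, mul_assoc]
    _ = 0 := by rw [hu, zero_mul, neg_zero]

variable {k : ℕ} {ν : Fin k → A}

lemma sum_sq_zero (hsq : ∀ i, ν i * ν i = 0) (hac : ∀ i j, ν i * ν j = - (ν j * ν i)) :
    (∑ i, ν i) * (∑ i, ν i) = 0 := by
  set T := (∑ i, ν i) * (∑ i, ν i) with hT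
  have h1 : T = -T := by
    calc T = ∑ i, ∑ j, ν i * ν j := by rw [hT, Finset.sum_mul_sum]
      _ = ∑ i, ∑ j, -(ν j * ν i) :=
          Finset.sum_congr rfl fun i _ => Finset.sum_congr rfl fun j _ => hac i j
      _ = -∑ i, ∑ j, ν j * ν i := by
          simp only [Finset.sum_neg_distrib]
      _ = -T := by rw [hT, Finset.sum_mul_sum, Finset.sum_comm]
  have h2 : (2 : ℂ) • T = 0 := by
    rw [two_smul]
    nth_rewrite 1 [h1]
    rw [neg_add_cancel]
  calc T = (2 : ℂ)⁻¹ • ((2 : ℂ) • T) := by rw [smul_smul]; norm_num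
    _ = 0 := by rw [h2, smul_zero]

lemma pair_commute (hsq : ∀ i, ν i * ν i = 0) (hac : ∀ i j, ν i * ν j = - (ν j * ν i))
    (a b c : Fin k) : Commute (ν a * ν b) (ν c) :=
  (anticomm_mul (hac a c) (hac b c) : (ν a * ν b) * ν c = ν c * (ν a * ν b))

lemma Q_nilpotent (hsq : ∀ i, ν i * ν i = 0) (hac : ∀ i j, ν i * ν j = - (ν j * ν i)) :
    IsNilpotent (∑ i, ∑ j ∈ Finset.Ioi i, ν i * ν j) := by
  have hterm : ∀ a b c d : Fin k, Commute (ν a * ν b) (ν c * ν d) := fun a b c d =>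
    ((pair_commute hsq hac a b c).mul_right (pair_commute hsq hac a b d))
  refine Commute.isNilpotent_sum (fun i _ => ?_) (fun i j _ _ => ?_)
  · refine Commute.isNilpotent_sum (fun j _ => ?_) (fun a b _ _ => ?_)
    · exact ⟨2, by rw [pow_two]; exact pair_sq_zero (hsq i) (hac j i)⟩
    · exact hterm _ _ _ _
  · exact Commute.sum_left _ _ _ fun a _ => Commute.sum_right _ _ _ fun b _ =>
      (hterm _ _ _ _)

end Aux

lemma key_lemma {A : Type*} [Ring A] [Algebra ℂ A] :
    ∀ (k : ℕ) (ν : Fin k → A), (∀ i, ν i * ν i = 0) →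
      (∀ i j, ν i * ν j = - (ν j * ν i)) →
      (List.ofFn fun i => 1 + ν i).prod
        = nilExp (∑ i, ∑ j ∈ Finset.Ioi i, ν i * ν j) * (1 + ∑ i, ν i) := by
  intro k
  induction k with
  | zero =>
    intro ν _ _
    have h0 : nilExp (0 : A) = 1 + 0 := nilExp_of_sq_zero (by simp)
    simp [h0]
  | succ k ih =>
    intro ν hsq hac
    set w := ν 0 with hw
    set ν' : Fin k → A := fun i => ν i.succ with hν'
    have hsq' : ∀ i, ν' i * ν' i = 0 := fun i => hsq _
    have hac' : ∀ i j, ν' i * ν' j = - (ν' j * ν' i) := fun i j => hac _ _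
    set S' := ∑ i, ν' i with hS'
    set Q' := ∑ i, ∑ j ∈ Finset.Ioi i, ν' i * ν' j with hQ'
    -- decompose the sums
    have hS : (∑ i, ν i) = w + S' := by
      rw [Fin.sum_univ_succ]
    have hQ : (∑ i : Fin (k+1), ∑ j ∈ Finset.Ioi i, ν i * ν j) = Q' + w * S' := by
      rw [Fin.sum_univ_succ]
      have h0 : (∑ j ∈ Finset.Ioi (0 : Fin (k+1)), ν 0 * ν j) = w * S' := by
        rw [Fin.sum_Ioi_zero, hS', Finset.mul_sum]
      have hsucc : ∀ i : Fin k, (∑ j ∈ Finset.Ioi i.succ, ν i.succ * ν j)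
          = ∑ j ∈ Finset.Ioi i, ν' i * ν' j := fun i => Fin.sum_Ioi_succ _ i
      rw [h0, Finset.sum_congr rfl fun i _ => hsucc i, ← hQ']
      abel
    -- basic multiplicative facts
    have hww : w * w = 0 := hsq 0
    have hSS : S' * S' = 0 := sum_sq_zero hsq' hac'
    have hSw : S' * w = - (w * S') := by
      rw [hS', Finset.sum_mul, Finset.mul_sum, ← Finset.sum_neg_distrib]
      exact Finset.sum_congr rfl fun i _ => hac _ _
    have hb : (w * S') * (w * S') = 0 := by
      calc (w * S') * (w * S') = w * (S' * w) * S' := by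
            rw [mul_assoc, mul_assoc, mul_assoc]
        _ = -(w * (w * S') * S') := by rw [hSw, mul_neg, neg_mul]
        _ = -((w * w) * (S' * S')) := by rw [mul_assoc, mul_assoc, mul_assoc]
        _ = 0 := by rw [hww, zero_mul, neg_zero]
    have hcomm_single : ∀ z : Fin (k+1), Commute Q' (ν z) := by
      intro z
      refine Commute.sum_left _ _ _ fun a _ => Commute.sum_left _ _ _ fun b _ => ?_
      exact anticomm_mul (hac _ _) (hac _ _)
    have hcQ : Q' * (w * S') = (w * S') * Q' := by
      have h1 : Commute Q' w := hcomm_single 0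
      have h2 : Commute Q' S' :=
        Commute.sum_right _ _ _ fun i _ => hcomm_single i.succ
      exact (h1.mul_right h2)
    have hQnil : IsNilpotent Q' := Q_nilpotent hsq' hac'
    -- nilExp factorization
    have hexp : nilExp (Q' + w * S') = nilExp Q' * (1 + w * S') :=
      nilExp_add_sq_zero hQnil hb hcQ
    -- product decomposition
    have hprod : (List.ofFn fun i : Fin (k+1) => 1 + ν i).prod
        = (1 + w) * (List.ofFn fun i : Fin k => 1 + ν' i).prod := by
      rw [List.ofFn_succ]
      rfl
    rw [hprod, ih ν' hsq' hac', hS, hQ, hexp]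
    -- commute (1 + w) past nilExp Q'
    have hQw : nilExp Q' * (1 + w) = (1 + w) * nilExp Q' := by
      have h1 : Commute (1 + w) Q' :=
        (Commute.one_left Q').add_left ((hcomm_single 0).symm)
      have : Commute (1 + w) (nilExp Q') := by
        unfold nilExp
        refine Commute.sum_right _ _ _ fun j _ => ?_
        exact ((h1.pow_right j).smul_right _)
      exact this.symm
    calc (1 + w) * (nilExp Q' * (1 + S'))
        = nilExp Q' * ((1 + w) * (1 + S')) := by
          rw [← mul_assoc, ← hQw, mul_assoc]
      _ = nilExp Q' * ((1 + w * S') * (1 + (w + S'))) := by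
          congr 1
          have e1 : w * S' * w = 0 := by
            rw [mul_assoc, hSw, mul_neg, ← mul_assoc, hww, zero_mul, neg_zero]
          have e2 : w * S' * S' = 0 := by rw [mul_assoc, hSS, mul_zero]
          simp only [add_mul, mul_add, one_mul, mul_one]
          rw [e1, e2]
          abel
      _ = nilExp Q' * (1 + w * S') * (1 + (w + S')) := by rw [mul_assoc]

/-- **Equation (5.4).** For degree-one elements `νᵢ = ι vᵢ` of the exterior algebra
`Λ(M)` of a `ℂ`-module `M`, the ordered product `(1+ν₁)(1+ν₂)⋯(1+ν_k)` equals
`exp(Σ_{i<j} νᵢνⱼ) · exp(Σᵢ νᵢ)`; both exponents are nilpotent, and in particular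
`(Σᵢνᵢ)² = 0`, so `exp(Σᵢνᵢ) = 1 + Σᵢνᵢ`. -/
theorem prod_one_add_eq_exp_mul_exp
    {M : Type*} [AddCommGroup M] [Module ℂ M] (k : ℕ) (v : Fin k → M) :
    IsNilpotent (∑ i : Fin k, ∑ j ∈ Finset.Ioi i,
        ExteriorAlgebra.ι ℂ (v i) * ExteriorAlgebra.ι ℂ (v j)) ∧
    ((∑ i : Fin k, ExteriorAlgebra.ι ℂ (v i)) ^ 2 = 0 ∧
      nilExp (∑ i : Fin k, ExteriorAlgebra.ι ℂ (v i))
        = 1 + ∑ i : Fin k, ExteriorAlgebra.ι ℂ (v i)) ∧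
    (List.ofFn fun i : Fin k => (1 : ExteriorAlgebra ℂ M) + ExteriorAlgebra.ι ℂ (v i)).prod
      = nilExp (∑ i : Fin k, ∑ j ∈ Finset.Ioi i,
          ExteriorAlgebra.ι ℂ (v i) * ExteriorAlgebra.ι ℂ (v j))
        * nilExp (∑ i : Fin k, ExteriorAlgebra.ι ℂ (v i)) := by
  have hsq : ∀ i, ExteriorAlgebra.ι ℂ (v i) * ExteriorAlgebra.ι ℂ (v i) = 0 :=
    fun i => ι_sq_zero _
  have hac : ∀ i j, ExteriorAlgebra.ι ℂ (v i) * ExteriorAlgebra.ι ℂ (v j)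
      = - (ExteriorAlgebra.ι ℂ (v j) * ExteriorAlgebra.ι ℂ (v i)) := fun i j =>
    eq_neg_of_add_eq_zero_left (ι_add_mul_swap (v i) (v j))
  have hS2 : (∑ i : Fin k, ExteriorAlgebra.ι ℂ (v i)) ^ 2 = 0 := by
    rw [pow_two]; exact sum_sq_zero hsq hac
  refine ⟨Q_nilpotent hsq hac, ⟨hS2, nilExp_of_sq_zero hS2⟩, ?_⟩
  rw [key_lemma k (fun i => ExteriorAlgebra.ι ℂ (v i)) hsq hac, nilExp_of_sq_zero hS2]
end

section
/- Let F be a representation of a purely ordered category whose index set Σ is directed and all of whose objects are of the form V σ. Then the following are equivalent: (a) F is irreducible, i.e. every subrepresentation A of F satisfies either A(σ) = 0 for all σ or A(σ) = F(V σ) for all σ; (b) for every σ ∈ Σ, every subspace of F(V σ) that is invariant under F(P) for all P ∈ End(V σ) equals 0 or F(V σ). (Lemma 5.6.) -/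
open CategoryTheory

/-- **Lemma 5.6.** Let `F` be a representation of a purely ordered category whose directed
index set numbers all the objects. Then `F` is irreducible (every subrepresentation is the
zero family or the full family) if and only if for every `σ` every subspace of `F (V σ)`
invariant under all the operators `F P`, `P ∈ End(V σ)`, equals `0` or `F (V σ)`. -/
theorem irreducible_iff_endomorphism_irreducible
    {Idx : Type*} [Preorder Idx] {C : Type*} [Category C]
    (V : Idx → C)
    (lam : ∀ {σ τ : Idx}, σ ≤ τ → (V σ ⟶ V τ))
    (mu : ∀ {σ τ : Idx}, σ ≤ τ → (V τ ⟶ V σ))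
    (h56 : ∀ {σ τ : Idx} (h : σ ≤ τ), lam h ≫ mu h = 𝟙 (V σ))
    (h57a : ∀ {σ σ' σ'' : Idx} (h : σ ≤ σ') (h' : σ' ≤ σ''),
      lam h ≫ lam h' = lam (h.trans h'))
    (h57b : ∀ {σ σ' σ'' : Idx} (h : σ ≤ σ') (h' : σ' ≤ σ''),
      mu h' ≫ mu h = mu (h.trans h'))
    (hobj : ∀ X : C, ∃ σ : Idx, V σ = X)
    (hdir : ∀ σ τ : Idx, ∃ κ : Idx, σ ≤ κ ∧ τ ≤ κ)
    (F : C ⥤ ModuleCat ℂ) :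
    ((∀ A : (σ : Idx) → Submodule ℂ (F.obj (V σ)),
        (∀ (σ τ : Idx) (P : V σ ⟶ V τ), (A σ).map (F.map P).hom ≤ A τ) →
        (∀ σ, A σ = ⊥) ∨ (∀ σ, A σ = ⊤)) ↔
      (∀ (σ : Idx) (U : Submodule ℂ (F.obj (V σ))),
        (∀ P : V σ ⟶ V σ, U.map (F.map P).hom ≤ U) → U = ⊥ ∨ U = ⊤)) := by
  constructor
  · -- (a) → (b)
    intro ha σ U hU
    set A : (τ : Idx) → Submodule ℂ (F.obj (V τ)) :=
      fun τ => ⨆ P : V σ ⟶ V τ, U.map (F.map P).hom with hAdef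
    have hinv : ∀ (τ τ' : Idx) (Q : V τ ⟶ V τ'), (A τ).map (F.map Q).hom ≤ A τ' := by
      intro τ τ' Q
      rw [hAdef]
      simp only [Submodule.map_iSup]
      apply iSup_le
      intro P
      refine le_trans (le_of_eq ?_) (le_iSup (fun P : V σ ⟶ V τ' => U.map (F.map P).hom) (P ≫ Q))
      rw [F.map_comp, ModuleCat.hom_comp]
      exact (Submodule.map_comp _ _ U).symm
    have hAσ : A σ = U := by
      apply le_antisymm
      · exact iSup_le fun P => hU P
      · refine le_trans ?_ (le_iSup (fun P : V σ ⟶ V σ => U.map (F.map P).hom) (𝟙 (V σ)))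
        rw [F.map_id, ModuleCat.hom_id]
        exact le_of_eq (Submodule.map_id U).symm
    rcases ha A hinv with h | h
    · left; rw [← hAσ]; exact h σ
    · right; rw [← hAσ]; exact h σ
  · -- (b) → (a)
    intro hb A hA
    by_cases hall : ∀ σ, A σ = ⊥
    · exact Or.inl hall
    · right
      push_neg at hall
      obtain ⟨σ, hσ⟩ := hall
      intro τ
      obtain ⟨κ, hσκ, hτκ⟩ := hdir σ τ
      have hκne : A κ ≠ ⊥ := by
        intro hbot
        apply hσ
        rw [eq_bot_iff]
        intro x hx
        have hmem : (F.map (lam hσκ)).hom x ∈ A κ :=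
          hA σ κ (lam hσκ) (Submodule.mem_map_of_mem hx)
        rw [hbot, Submodule.mem_bot] at hmem
        have hid : (F.map (mu hσκ)).hom ((F.map (lam hσκ)).hom x) = x := by
          have : (F.map (lam hσκ ≫ mu hσκ)).hom x = x := by rw [h56, F.map_id]; rfl
          rw [F.map_comp] at this
          exact this
        rw [hmem, map_zero] at hid
        simp [← hid]
      have hκtop : A κ = ⊤ := (hb κ (A κ) (fun P => hA κ κ P)).resolve_left hκne
      rw [eq_top_iff]
      intro y _
      have hy : (F.map (lam hτκ)).hom y ∈ A κ := by rw [hκtop]; trivial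
      have h2 : (F.map (mu hτκ)).hom ((F.map (lam hτκ)).hom y) ∈ A τ :=
        hA κ τ (mu hτκ) (Submodule.mem_map_of_mem hy)
      have h3 : (F.map (mu hτκ)).hom ((F.map (lam hτκ)).hom y) = y := by
        have : (F.map (lam hτκ ≫ mu hτκ)).hom y = y := by rw [h56, F.map_id]; rfl
        rw [F.map_comp] at this
        exact this
      rwa [h3] at h2
end

section
/- Let F be a representation of a purely ordered category whose index set Σ is directed and all of whose objects are of the form V σ, with all spaces F(V σ) finite-dimensional over ℂ. Suppose that for every σ, every subspace of F(V σ) invariant under F(P) for all P ∈ End(V σ) possesses an invariant complement (i.e. the subordinate representations of the monoids End(V σ) are completely reducible). Let S be an irreducible subrepresentation of F, meaning S is not the zero family and every subrepresentation A of F with A(σ) ≤ S(σ) for all σ equals S or is the zero family. Then there exists a subrepresentation T of F complementary to S: S(σ) ∩ T(σ) = 0 and S(σ) + T(σ) = F(V σ) for every σ ∈ Σ. (Theorem 5.4: representations of ordered Cayley–Klein categories with completely reducible fibers are completely reducible.) -/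
open CategoryTheory

/-- **Theorem 5.4** (complete reducibility for ordered Cayley–Klein categories).
Let `F` be a representation of a purely ordered category whose directed index set numbers
all the objects, with all spaces `F (V σ)` finite-dimensional over `ℂ`. Assume that every
`End(V σ)`-invariant subspace of `F (V σ)` has an `End(V σ)`-invariant complement.
Then every irreducible subrepresentation `S` of `F` admits a complementary
subrepresentation `T`: `S σ ∩ T σ = 0` and `S σ + T σ = F (V σ)` for every `σ`. -/
theorem irreducible_subrep_has_complement
    {Idx : Type*} [Preorder Idx] {C : Type*} [Category C]
    (V : Idx → C)
    (lam : ∀ {σ τ : Idx}, σ ≤ τ → (V σ ⟶ V τ))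
    (mu : ∀ {σ τ : Idx}, σ ≤ τ → (V τ ⟶ V σ))
    (h56 : ∀ {σ τ : Idx} (h : σ ≤ τ), lam h ≫ mu h = 𝟙 (V σ))
    (h57a : ∀ {σ σ' σ'' : Idx} (h : σ ≤ σ') (h' : σ' ≤ σ''),
      lam h ≫ lam h' = lam (h.trans h'))
    (h57b : ∀ {σ σ' σ'' : Idx} (h : σ ≤ σ') (h' : σ' ≤ σ''),
      mu h' ≫ mu h = mu (h.trans h'))
    (hobj : ∀ X : C, ∃ σ : Idx, V σ = X)
    (hdir : ∀ σ τ : Idx, ∃ κ : Idx, σ ≤ κ ∧ τ ≤ κ)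
    (F : C ⥤ ModuleCat ℂ)
    [∀ σ : Idx, FiniteDimensional ℂ (F.obj (V σ))]
    (hcompl : ∀ (σ : Idx) (U : Submodule ℂ (F.obj (V σ))),
      (∀ P : V σ ⟶ V σ, U.map (F.map P).hom ≤ U) →
      ∃ U' : Submodule ℂ (F.obj (V σ)),
        (∀ P : V σ ⟶ V σ, U'.map (F.map P).hom ≤ U') ∧ U ⊓ U' = ⊥ ∧ U ⊔ U' = ⊤)
    (S : (σ : Idx) → Submodule ℂ (F.obj (V σ)))
    (hS : ∀ (σ τ : Idx) (P : V σ ⟶ V τ), (S σ).map (F.map P).hom ≤ S τ)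
    (hSne : ¬ (∀ σ, S σ = ⊥))
    (hSirr : ∀ A : (σ : Idx) → Submodule ℂ (F.obj (V σ)),
      (∀ (σ τ : Idx) (P : V σ ⟶ V τ), (A σ).map (F.map P).hom ≤ A τ) →
      (∀ σ, A σ ≤ S σ) →
      (∀ σ, A σ = S σ) ∨ (∀ σ, A σ = ⊥)) :
    ∃ T : (σ : Idx) → Submodule ℂ (F.obj (V σ)),
      (∀ (σ τ : Idx) (P : V σ ⟶ V τ), (T σ).map (F.map P).hom ≤ T τ) ∧
      ∀ σ, S σ ⊓ T σ = ⊥ ∧ S σ ⊔ T σ = ⊤ := by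
  classical
  push_neg at hSne
  obtain ⟨σ0, hσ0⟩ := hSne
  -- retraction on the level of vector spaces
  have hretr : ∀ {σ τ : Idx} (h : σ ≤ τ) (x : F.obj (V σ)),
      F.map (mu h) (F.map (lam h) x) = x := by
    intro σ τ h x
    have hc : F.map (lam h) ≫ F.map (mu h) = 𝟙 (F.obj (V σ)) := by
      rw [← F.map_comp, h56 h, F.map_id]
    calc F.map (mu h) (F.map (lam h) x) = (F.map (lam h) ≫ F.map (mu h)) x := rfl
      _ = x := by rw [hc]; rfl
  -- maps of submodules compose along the functor
  have hmapcomp : ∀ {X Y Z : C} (f : X ⟶ Y) (g : Y ⟶ Z) (p : Submodule ℂ (F.obj X)),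
      (p.map (F.map f).hom).map (F.map g).hom = p.map (F.map (f ≫ g)).hom := by
    intro X Y Z f g p
    rw [F.map_comp]
    ext y
    simp only [Submodule.mem_map]
    constructor
    · rintro ⟨z, ⟨w, hw, rfl⟩, rfl⟩
      exact ⟨w, hw, rfl⟩
    · rintro ⟨w, hw, rfl⟩
      exact ⟨F.map f w, ⟨w, hw, rfl⟩, rfl⟩
  -- Zorn: a maximal subrepresentation intersecting S trivially
  set Ω : Set ((σ : Idx) → Submodule ℂ (F.obj (V σ))) :=
    {T | (∀ (σ τ : Idx) (P : V σ ⟶ V τ), (T σ).map (F.map P).hom ≤ T τ) ∧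
      ∀ σ, S σ ⊓ T σ = ⊥} with hΩdef
  obtain ⟨T, hTmax⟩ := zorn_le₀ Ω (by
    intro c hcΩ hc
    rcases Set.eq_empty_or_nonempty c with rfl | hcne
    · refine ⟨fun _ => ⊥, ⟨?_, ?_⟩, by simp⟩
      · intro σ τ P; simp
      · intro σ; simp
    · have : Nonempty c := hcne.to_subtype
      refine ⟨fun σ => ⨆ A : c, (A : (σ : Idx) → Submodule ℂ (F.obj (V σ))) σ, ⟨?_, ?_⟩, ?_⟩
      · intro σ τ P
        rw [Submodule.map_iSup]
        exact iSup_le fun A => le_trans ((hcΩ A.2).1 σ τ P)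
          (le_iSup (fun B : c => (B : (σ : Idx) → Submodule ℂ (F.obj (V σ))) τ) A)
      · intro σ
        have hdirc : Directed (· ≤ ·)
            (fun A : c => (A : (σ : Idx) → Submodule ℂ (F.obj (V σ))) σ) := by
          intro A B
          rcases hc.total A.2 B.2 with h | h
          · exact ⟨B, h σ, le_rfl⟩
          · exact ⟨A, le_rfl, h σ⟩
        rw [eq_bot_iff]
        intro x hx
        obtain ⟨hxS, hxT⟩ := hx
        obtain ⟨A, hA⟩ := (Submodule.mem_iSup_of_directed _ hdirc).mp hxT
        have := (hcΩ A.2).2 σ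
        have hx' : x ∈ S σ ⊓ (A : (σ : Idx) → Submodule ℂ (F.obj (V σ))) σ := ⟨hxS, hA⟩
        rw [this] at hx'
        exact hx'
      · intro A hA σ
        exact le_iSup (fun B : c => (B : (σ : Idx) → Submodule ℂ (F.obj (V σ))) σ) ⟨A, hA⟩)
  obtain ⟨⟨hTrep, hTdisj⟩, hTmx⟩ := hTmax
  -- key step: S κ ⊔ T κ = ⊤ for κ above σ0
  have key : ∀ κ : Idx, σ0 ≤ κ → S κ ⊔ T κ = ⊤ := by
    intro κ hκ
    by_contra hW
    -- S κ is nonzero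
    have hSκ : S κ ≠ ⊥ := by
      obtain ⟨x, hx, hx0⟩ := (S σ0).ne_bot_iff.mp hσ0
      rw [Submodule.ne_bot_iff]
      refine ⟨F.map (lam hκ) x, hS σ0 κ (lam hκ) ⟨x, hx, rfl⟩, fun h0 => hx0 ?_⟩
      have := hretr hκ x
      rw [h0, map_zero] at this
      exact this.symm
    -- invariant complement of W = S κ ⊔ T κ
    obtain ⟨U, hUinv, hUW1, hUW2⟩ := hcompl κ (S κ ⊔ T κ) (by
      intro P
      rw [Submodule.map_sup]
      exact sup_le_sup (hS κ κ P) (hTrep κ κ P))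
    set Cc : Submodule ℂ (F.obj (V κ)) := T κ ⊔ U with hCcdef
    have hCinv : ∀ P : V κ ⟶ V κ, Cc.map (F.map P).hom ≤ Cc := by
      intro P
      rw [hCcdef, Submodule.map_sup]
      exact sup_le_sup (hTrep κ κ P) (hUinv P)
    -- modular-law computation: S κ ⊓ Cc = ⊥
    have hmod : Cc ⊓ (S κ ⊔ T κ) = T κ := by
      rw [hCcdef, sup_inf_assoc_of_le U (le_sup_right : T κ ≤ S κ ⊔ T κ),
        inf_comm U (S κ ⊔ T κ), hUW1, sup_bot_eq]
    have hCS : S κ ⊓ Cc = ⊥ := by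
      have h1 : S κ ⊓ Cc = S κ ⊓ (Cc ⊓ (S κ ⊔ T κ)) := by
        rw [inf_comm Cc (S κ ⊔ T κ), ← inf_assoc, inf_eq_left.mpr (le_sup_left : S κ ≤ S κ ⊔ T κ)]
      rw [h1, hmod, hTdisj κ]
    have hCtop : S κ ⊔ Cc = ⊤ := by
      rw [hCcdef, ← sup_assoc, hUW2]
    have hTC : T κ ≤ Cc := le_sup_left
    have hCneT : ¬ Cc ≤ T κ := by
      intro hle
      have hU : U ≤ T κ := le_trans le_sup_right hle
      have hUbot : U = ⊥ := by
        rw [eq_bot_iff, ← hUW1]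
        exact le_inf (le_trans hU le_sup_right) le_rfl
      rw [hUbot, sup_bot_eq] at hUW2
      exact hW hUW2
    -- the subrepresentation generated by Cc, added to T
    set D : (σ : Idx) → Submodule ℂ (F.obj (V σ)) :=
      fun σ => ⨆ P : (V κ ⟶ V σ), Cc.map (F.map P).hom with hDdef
    have hDrep : ∀ (σ τ : Idx) (P : V σ ⟶ V τ), (D σ).map (F.map P).hom ≤ D τ := by
      intro σ τ P
      rw [hDdef, Submodule.map_iSup]
      exact iSup_le fun Q => by
        rw [hmapcomp Q P Cc]
        exact le_iSup (fun R : V κ ⟶ V τ => Cc.map (F.map R).hom) (Q ≫ P)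
    have hDκ : D κ = Cc := by
      apply le_antisymm
      · exact iSup_le fun P => hCinv P
      · refine le_trans ?_ (le_iSup (fun P : V κ ⟶ V κ => Cc.map (F.map P).hom) (𝟙 (V κ)))
        rw [F.map_id]
        intro x hx
        exact ⟨x, hx, rfl⟩
    set T' : (σ : Idx) → Submodule ℂ (F.obj (V σ)) := fun σ => T σ ⊔ D σ with hT'def
    have hT'rep : ∀ (σ τ : Idx) (P : V σ ⟶ V τ), (T' σ).map (F.map P).hom ≤ T' τ := by
      intro σ τ P
      rw [hT'def, Submodule.map_sup]
      exact sup_le_sup (hTrep σ τ P) (hDrep σ τ P)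
    have hT'κ : T' κ = Cc := by
      show T κ ⊔ D κ = Cc
      rw [hDκ]
      exact sup_eq_right.mpr hTC
    -- T' is strictly bigger than T, hence not in Ω
    have hT'notΩ : T' ∉ Ω := by
      intro hmem
      have hle : T ≤ T' := fun σ => le_sup_left
      have := hTmx hmem hle
      exact hCneT (hT'κ ▸ this κ)
    have hbad : ∃ σ1, S σ1 ⊓ T' σ1 ≠ ⊥ := by
      by_contra hall
      push_neg at hall
      exact hT'notΩ ⟨hT'rep, hall⟩
    obtain ⟨σ1, hσ1⟩ := hbad
    -- A = S ⊓ T' is a subrepresentation contained in S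
    have hArep : ∀ (σ τ : Idx) (P : V σ ⟶ V τ),
        ((fun σ => S σ ⊓ T' σ) σ).map (F.map P).hom ≤ (fun σ => S σ ⊓ T' σ) τ := by
      intro σ τ P
      exact le_inf (le_trans (Submodule.map_mono inf_le_left) (hS σ τ P))
        (le_trans (Submodule.map_mono inf_le_right) (hT'rep σ τ P))
    rcases hSirr (fun σ => S σ ⊓ T' σ) hArep (fun σ => inf_le_left) with hAS | hAbot
    · have h2 : S κ ⊓ T' κ = S κ := hAS κ
      rw [hT'κ, hCS] at h2
      exact hSκ h2.symm
    · exact hσ1 (hAbot σ1)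
  -- conclusion
  refine ⟨T, hTrep, fun σ => ⟨hTdisj σ, ?_⟩⟩
  obtain ⟨κ, h0κ, hσκ⟩ := hdir σ0 σ
  have htop := key κ h0κ
  rw [eq_top_iff]
  intro x _
  have hx : F.map (lam hσκ) x ∈ S κ ⊔ T κ := by rw [htop]; trivial
  obtain ⟨s, hs, t, ht, hst⟩ := Submodule.mem_sup.mp hx
  have hxeq : x = F.map (mu hσκ) s + F.map (mu hσκ) t := by
    have := hretr hσκ x
    rw [← this, ← hst, map_add]
  rw [hxeq]
  exact Submodule.add_mem_sup (hS κ σ (mu hσκ) ⟨s, hs, rfl⟩) (hTrep κ σ (mu hσκ) ⟨t, ht, rfl⟩)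
end
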